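/- Let x ∈ ℝ⁹ with x₁ ≥ ⋯ ≥ x₉ > 0 such that L₁(x) (as defined below) is positive semidefinite and det L₁(x) = 0. Then (x₃−x₅)² − 4x₄x₇ + (x₃−x₅)(x₂−x₆) + 2x₄(x₁−x₈) ≤ 0. -/

import Mathlib

/-- The Hildebrand matrix `L₁` built from a vector `x ∈ ℝ⁹` (indices `x 0, …, x 8`
correspond to `x₁, …, x₉`). -/
def L1 (x : Fin 9 → ℝ) : Matrix (Fin 3) (Fin 3) ℝ :=
  !![2 * x 8, x 7 - x 0, x 5 - x 1;
     x 7 - x 0, 2 * x 6, x 4 - x 2;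
     x 5 - x 1, x 4 - x 2, 2 * x 3]

set_option maxHeartbeats 1000000 in
/-- If `x₁ ≥ ⋯ ≥ x₉ > 0`, `L₁(x)` is positive semidefinite and `det L₁(x) = 0`, then
`(x₃−x₅)² − 4x₄x₇ + (x₃−x₅)(x₂−x₆) + 2x₄(x₁−x₈) ≤ 0`. -/
theorem L1_boundary_ineq_det89 (x : Fin 9 → ℝ)
    (hsort : ∀ i j : Fin 9, i ≤ j → x j ≤ x i)
    (hpos : ∀ i, 0 < x i)
    (hL1 : (L1 x).PosSemidef)
    (hdet : (L1 x).det = 0) :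
    (x 2 - x 4) ^ 2 - 4 * x 3 * x 6 + (x 2 - x 4) * (x 1 - x 5) +
      2 * x 3 * (x 0 - x 7) ≤ 0 := by
  have h07 : x 7 ≤ x 0 := hsort 0 7 (by decide)
  have h15 : x 5 ≤ x 1 := hsort 1 5 (by decide)
  have h12 : x 2 ≤ x 1 := hsort 1 2 (by decide)
  have h24 : x 4 ≤ x 2 := hsort 2 4 (by decide)
  have h45 : x 5 ≤ x 4 := hsort 4 5 (by decide)
  have h68 : x 8 ≤ x 6 := hsort 6 8 (by decide)
  have h3 : 0 < x 3 := hpos 3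
  have h6 : 0 < x 6 := hpos 6
  have h8 : 0 < x 8 := hpos 8
  simp [L1, Matrix.det_fin_three] at hdet
  have hq := hL1.dotProduct_mulVec_nonneg ![0, (x 2 - x 4), 2 * x 6]
  simp [L1, Matrix.mulVec, dotProduct, Fin.sum_univ_three] at hq
  have hD : 0 ≤ 2 * x 6 * (2 * x 3) - (x 2 - x 4) ^ 2 := by nlinarith [hq, h6]
  have hS : 2 * x 3 * (x 0 - x 7) ^ 2 + 2 * x 6 * (x 1 - x 5) ^ 2
      + 2 * (x 0 - x 7) * (x 1 - x 5) * (x 2 - x 4)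
      ≤ 2 * x 6 * (2 * x 6 * (2 * x 3) - (x 2 - x 4) ^ 2) := by
    nlinarith [mul_nonneg hD (by linarith : (0:ℝ) ≤ 2 * x 6 - 2 * x 8)]
  have hQR : (x 2 - x 4) ^ 2 ≤ (x 1 - x 5) ^ 2 := by nlinarith
  have key : (2 * x 3 * (x 0 - x 7) + (x 1 - x 5) * (x 2 - x 4)) ^ 2
      ≤ (2 * x 6 * (2 * x 3) - (x 2 - x 4) ^ 2) ^ 2 := by
    have hid : (2 * x 6 * (2 * x 3) - (x 2 - x 4) ^ 2) ^ 2
        - (2 * x 3 * (x 0 - x 7) + (x 1 - x 5) * (x 2 - x 4)) ^ 2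
        = 2 * x 3 * (2 * x 6 * (2 * x 6 * (2 * x 3) - (x 2 - x 4) ^ 2)
            - (2 * x 3 * (x 0 - x 7) ^ 2 + 2 * x 6 * (x 1 - x 5) ^ 2
              + 2 * (x 0 - x 7) * (x 1 - x 5) * (x 2 - x 4)))
          + (2 * x 6 * (2 * x 3) - (x 2 - x 4) ^ 2)
              * ((x 1 - x 5) ^ 2 - (x 2 - x 4) ^ 2) := by ring
    linarith [mul_nonneg (by linarith : (0:ℝ) ≤ 2 * x 3) (sub_nonneg.2 hS),
      mul_nonneg hD (sub_nonneg.2 hQR), hid]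
  have hs : 0 ≤ 2 * x 3 * (x 0 - x 7) + (x 1 - x 5) * (x 2 - x 4) := by
    have := mul_nonneg (by linarith : (0:ℝ) ≤ x 1 - x 5) (by linarith : (0:ℝ) ≤ x 2 - x 4)
    nlinarith
  nlinarith [key, hD, hs]
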